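/- With the same mechanism M, if 1/2 ≤ α ≤ 1 then for adjacent inputs T_1, T_2 and any output I: Pr[M(T_1)=I] ≤ exp(ε')·Pr[M(T_2)=I] with ε' = ln(1 + ((1-α)/α)·(2^{K/m}+1)·d^{K/m}). In particular, when α = 1 the mechanism satisfies 0-differential privacy (the output distribution is independent of the input). -/

import Mathlib

open Finset

/-- Probability that the consensus-sparsification coordinate mechanism with
obfuscation parameter `α`, applied to a top-coordinate set `T` of size `n`,
outputs the set `I`.  A number `r ~ B(n, α)` is drawn; then a subset
`T' ⊆ T` of size `n - r` is kept (chosen uniformly among the `C(n, n-r)`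
possibilities) and `r` further coordinates are chosen uniformly from the
complement of `T'` (among the `C(d - (n-r), r)` possibilities); the output is
their union.  The probability of output `I` is obtained by counting, for each
`r`, the kept sets `T'` that can lead to `I`. -/
noncomputable def mechProb (d n : ℕ) (α : ℝ) (T I : Finset (Fin d)) : ℝ :=
  ∑ r ∈ Finset.range (n + 1),
    (n.choose r : ℝ) * α ^ r * (1 - α) ^ (n - r) *
      (((Finset.univ.filter (fun T' : Finset (Fin d) =>
          T' ⊆ T ∧ T' ⊆ I ∧ T'.card = n - r ∧ (I \ T').card = r)).card : ℝ) /
        ((n.choose (n - r) : ℝ) * ((d - (n - r)).choose r : ℝ)))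

def cnt (d n : ℕ) (T I : Finset (Fin d)) (r : ℕ) : ℕ :=
  (Finset.univ.filter (fun T' : Finset (Fin d) =>
      T' ⊆ T ∧ T' ⊆ I ∧ T'.card = n - r ∧ (I \ T').card = r)).card

lemma cnt_eq_zero {d n : ℕ} (T I : Finset (Fin d)) {r : ℕ} (hr : r ≤ n)
    (hI : I.card ≠ n) : cnt d n T I r = 0 := by
  unfold cnt
  rw [Finset.card_eq_zero, Finset.filter_eq_empty_iff]
  rintro T' - ⟨h1, h2, h3, h4⟩
  apply hI
  have := Finset.card_sdiff_add_card_eq_card h2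
  rw [h4, h3] at this
  omega

lemma cnt_top {d n : ℕ} (T T'' I : Finset (Fin d)) (hI : I.card = n) :
    cnt d n T I n = 1 := by
  unfold cnt
  have : (Finset.univ.filter (fun T' : Finset (Fin d) =>
      T' ⊆ T ∧ T' ⊆ I ∧ T'.card = n - n ∧ (I \ T').card = n)) = {∅} := by
    ext x
    simp only [mem_filter, mem_univ, true_and, Nat.sub_self, Finset.card_eq_zero,
      mem_singleton]
    constructor
    · rintro ⟨-, -, rfl, -⟩; rfl
    · rintro rfl
      exact ⟨Finset.empty_subset _, Finset.empty_subset _, rfl, by simp [hI]⟩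
  rw [this, Finset.card_singleton]

lemma cnt_le {d n : ℕ} (T I : Finset (Fin d)) (r : ℕ) (hI : I.card = n) :
    cnt d n T I r ≤ 2 ^ n := by
  unfold cnt
  calc _ ≤ I.powerset.card := by
        apply Finset.card_le_card
        intro x hx
        simp only [mem_filter] at hx
        exact Finset.mem_powerset.2 hx.2.2.1
    _ = 2 ^ n := by rw [Finset.card_powerset, hI]

lemma term_nonneg (d n : ℕ) (α : ℝ) (hα0 : 0 ≤ α) (hα1 : α ≤ 1) (T I : Finset (Fin d))
    (r : ℕ) :
    0 ≤ (n.choose r : ℝ) * α ^ r * (1 - α) ^ (n - r) *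
      ((cnt d n T I r : ℝ) /
        ((n.choose (n - r) : ℝ) * ((d - (n - r)).choose r : ℝ))) := by
  have h1 : (0:ℝ) ≤ 1 - α := by linarith
  positivity

theorem consensus_sparsification_dp_high_alpha (d n : ℕ) (α : ℝ) (hn : 1 ≤ n) (hnd : n ≤ d)
    (hα0 : 1 / 2 ≤ α) (hα1 : α ≤ 1) (T₁ T₂ I : Finset (Fin d))
    (hT₁ : T₁.card = n) (hT₂ : T₂.card = n) (hadj : (T₁ ∩ T₂).card = n - 1) :
    mechProb d n α T₁ I ≤
      Real.exp (Real.log (1 + ((1 - α) / α) * (2 ^ n + 1) * (d : ℝ) ^ n)) *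
        mechProb d n α T₂ I ∧
      (α = 1 → mechProb d n α T₁ I = mechProb d n α T₂ I) := by
  have hαpos : (0:ℝ) < α := by linarith
  have h1α : (0:ℝ) ≤ 1 - α := by linarith
  have hαα : 1 - α ≤ α := by linarith
  -- X
  set X : ℝ := 1 + ((1 - α) / α) * (2 ^ n + 1) * (d : ℝ) ^ n with hXdef
  have hXpos : (0:ℝ) < X := by
    have : (0:ℝ) ≤ ((1 - α) / α) * (2 ^ n + 1) * (d : ℝ) ^ n := by
      apply mul_nonneg (mul_nonneg (div_nonneg h1α hαpos.le) (by positivity)) (by positivity)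
    simp only [hXdef]; linarith
  have hexp : Real.exp (Real.log X) = X := Real.exp_log hXpos
  -- rewrite mechProb in terms of cnt
  have hmech : ∀ T : Finset (Fin d), mechProb d n α T I =
      ∑ r ∈ Finset.range (n + 1),
        (n.choose r : ℝ) * α ^ r * (1 - α) ^ (n - r) *
          ((cnt d n T I r : ℝ) /
            ((n.choose (n - r) : ℝ) * ((d - (n - r)).choose r : ℝ))) := fun T => rfl
  constructor
  · -- main inequality
    rw [hexp]
    by_cases hI : I.card = n
    · -- the r = n term value
      have hCd : (0:ℝ) < (d.choose n : ℝ) := by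
        exact_mod_cast Nat.choose_pos hnd
      have hterm_n : ∀ T : Finset (Fin d),
          (n.choose n : ℝ) * α ^ n * (1 - α) ^ (n - n) *
            ((cnt d n T I n : ℝ) /
              ((n.choose (n - n) : ℝ) * ((d - (n - n)).choose n : ℝ)))
            = α ^ n / (d.choose n : ℝ) := by
        intro T
        rw [cnt_top T T I hI]
        simp [Nat.sub_self, div_eq_mul_inv]
      -- lower bound for T₂
      have hlow : α ^ n / (d.choose n : ℝ) ≤ mechProb d n α T₂ I := by
        rw [hmech T₂]
        rw [← hterm_n T₂]
        apply Finset.single_le_sum (f := fun r => (n.choose r : ℝ) * α ^ r * (1 - α) ^ (n - r) *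
          ((cnt d n T₂ I r : ℝ) / ((n.choose (n - r) : ℝ) * ((d - (n - r)).choose r : ℝ))))
          (fun r _ => term_nonneg d n α hαpos.le hα1 T₂ I r)
        simp
      -- upper bound for T₁
      have hup : mechProb d n α T₁ I ≤
          (n : ℝ) * ((1 - α) * α ^ (n - 1) * 2 ^ n) + α ^ n / (d.choose n : ℝ) := by
        rw [hmech T₁, Finset.sum_range_succ, hterm_n T₁]
        apply add_le_add_left
        calc ∑ r ∈ Finset.range n,
              (n.choose r : ℝ) * α ^ r * (1 - α) ^ (n - r) *
                ((cnt d n T₁ I r : ℝ) /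
                  ((n.choose (n - r) : ℝ) * ((d - (n - r)).choose r : ℝ)))
            ≤ ∑ r ∈ Finset.range n, (1 - α) * α ^ (n - 1) * 2 ^ n := by
              apply Finset.sum_le_sum
              intro r hr
              rw [Finset.mem_range] at hr
              have hrn : r ≤ n := hr.le
              have hCnr : (n.choose (n - r) : ℝ) = (n.choose r : ℝ) := by
                rw [Nat.choose_symm hrn]
              have hCnrpos : (0:ℝ) < (n.choose r : ℝ) := by
                exact_mod_cast Nat.choose_pos hrn
              have hCdpos : (1:ℝ) ≤ ((d - (n - r)).choose r : ℝ) := by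
                have hle : r ≤ d - (n - r) := by omega
                exact_mod_cast Nat.choose_pos hle
              have hcnt : (cnt d n T₁ I r : ℝ) ≤ 2 ^ n := by
                exact_mod_cast cnt_le T₁ I r hI
              have hdiv : (cnt d n T₁ I r : ℝ) /
                  ((n.choose (n - r) : ℝ) * ((d - (n - r)).choose r : ℝ))
                  ≤ 2 ^ n / (n.choose r : ℝ) := by
                rw [hCnr]
                exact div_le_div₀ (by positivity) hcnt hCnrpos
                  (le_mul_of_one_le_right hCnrpos.le hCdpos)
              calc (n.choose r : ℝ) * α ^ r * (1 - α) ^ (n - r) *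
                    ((cnt d n T₁ I r : ℝ) /
                      ((n.choose (n - r) : ℝ) * ((d - (n - r)).choose r : ℝ)))
                  ≤ (n.choose r : ℝ) * α ^ r * (1 - α) ^ (n - r) *
                      (2 ^ n / (n.choose r : ℝ)) := by
                    apply mul_le_mul_of_nonneg_left hdiv
                    exact mul_nonneg (mul_nonneg hCnrpos.le (by positivity))
                      (pow_nonneg h1α _)
                _ = α ^ r * (1 - α) ^ (n - r) * 2 ^ n := by
                    field_simp
                _ ≤ (1 - α) * α ^ (n - 1) * 2 ^ n := by
                    apply mul_le_mul_of_nonneg_right _ (by positivity)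
                    calc α ^ r * (1 - α) ^ (n - r)
                        = (α ^ r * (1 - α) ^ (n - r - 1)) * (1 - α) := by
                          rw [mul_assoc, ← pow_succ]
                          congr 2
                          omega
                      _ ≤ (α ^ r * α ^ (n - r - 1)) * (1 - α) := by
                          apply mul_le_mul_of_nonneg_right _ h1α
                          exact mul_le_mul_of_nonneg_left
                            (pow_le_pow_left₀ h1α hαα _) (by positivity)
                      _ = (1 - α) * α ^ (n - 1) := by
                          rw [← pow_add, show r + (n - r - 1) = n - 1 by omega,
                            mul_comm]
          _ = (n : ℝ) * ((1 - α) * α ^ (n - 1) * 2 ^ n) := by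
              rw [Finset.sum_const, Finset.card_range]; ring
      -- key numeric inequality
      have hkey : (n : ℝ) * 2 ^ n * (d.choose n : ℝ) ≤ ((2:ℝ) ^ n + 1) * (d : ℝ) ^ n := by
        have h1 : n * 2 ^ n * d.choose n ≤ (2 ^ n + 1) * d ^ n := by
          calc n * 2 ^ n * d.choose n ≤ (Nat.factorial n) * (2 ^ n + 1) * d.choose n := by
                apply Nat.mul_le_mul_right
                exact Nat.mul_le_mul n.self_le_factorial (by omega)
            _ = (2 ^ n + 1) * ((Nat.factorial n) * d.choose n) := by ring
            _ ≤ (2 ^ n + 1) * d ^ n := by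
                apply Nat.mul_le_mul_left
                rw [← Nat.descFactorial_eq_factorial_mul_choose]
                exact Nat.descFactorial_le_pow d n
        exact_mod_cast h1
      -- combine
      have hmid : (n : ℝ) * ((1 - α) * α ^ (n - 1) * 2 ^ n) + α ^ n / (d.choose n : ℝ)
          ≤ X * (α ^ n / (d.choose n : ℝ)) := by
        have hαn : α ^ n = α ^ (n - 1) * α := by
          rw [← pow_succ, Nat.sub_add_cancel hn]
        rw [hXdef]
        have hq : ((1 - α) / α) * (2 ^ n + 1) * (d : ℝ) ^ n * (α ^ n / (d.choose n : ℝ))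
            = ((1 - α) * α ^ (n - 1)) * (((2:ℝ) ^ n + 1) * (d : ℝ) ^ n / (d.choose n : ℝ)) := by
          rw [hαn]; field_simp
        have hkey' : (n : ℝ) * 2 ^ n ≤ ((2:ℝ) ^ n + 1) * (d : ℝ) ^ n / (d.choose n : ℝ) :=
          (le_div_iff₀ hCd).2 hkey
        have h2 : (n : ℝ) * ((1 - α) * α ^ (n - 1) * 2 ^ n)
            ≤ ((1 - α) * α ^ (n - 1)) * (((2:ℝ) ^ n + 1) * (d : ℝ) ^ n / (d.choose n : ℝ)) := by
          calc (n : ℝ) * ((1 - α) * α ^ (n - 1) * 2 ^ n)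
              = ((1 - α) * α ^ (n - 1)) * ((n : ℝ) * 2 ^ n) := by ring
            _ ≤ _ := by
                apply mul_le_mul_of_nonneg_left hkey'
                exact mul_nonneg h1α (by positivity)
        calc (n : ℝ) * ((1 - α) * α ^ (n - 1) * 2 ^ n) + α ^ n / (d.choose n : ℝ)
            ≤ ((1 - α) * α ^ (n - 1)) * (((2:ℝ) ^ n + 1) * (d : ℝ) ^ n / (d.choose n : ℝ))
              + α ^ n / (d.choose n : ℝ) := by linarith
          _ = (1 + ((1 - α) / α) * (2 ^ n + 1) * (d : ℝ) ^ n) * (α ^ n / (d.choose n : ℝ)) := by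
              rw [one_add_mul, hq]; ring
      calc mechProb d n α T₁ I ≤ _ := hup
        _ ≤ X * (α ^ n / (d.choose n : ℝ)) := hmid
        _ ≤ X * mechProb d n α T₂ I := by
            apply mul_le_mul_of_nonneg_left hlow hXpos.le
    · -- I.card ≠ n : both sides zero
      have hz : ∀ T : Finset (Fin d), mechProb d n α T I = 0 := by
        intro T
        rw [hmech T]
        apply Finset.sum_eq_zero
        intro r hr
        rw [Finset.mem_range] at hr
        rw [cnt_eq_zero T I (by omega) hI]
        simp
      rw [hz T₁, hz T₂]
      simp
  · -- α = 1 case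
    rintro rfl
    rw [hmech T₁, hmech T₂]
    apply Finset.sum_congr rfl
    intro r hr
    rw [Finset.mem_range] at hr
    by_cases hrn : r = n
    · rw [hrn]
      by_cases hI : I.card = n
      · rw [cnt_top T₁ T₁ I hI, cnt_top T₂ T₂ I hI]
      · rw [cnt_eq_zero T₁ I le_rfl hI, cnt_eq_zero T₂ I le_rfl hI]
    · have : (1 - (1:ℝ)) ^ (n - r) = 0 := by
        rw [sub_self, zero_pow (by omega : n - r ≠ 0)]
      rw [this]; ring
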